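/- Let Δ be a flag normal (d-1)-pseudomanifold and let σ = τ_1 ∪ τ_2 be a facet of Δ where τ_1 is an i-face and τ_2 is a (d-i-2)-face. Then V(lk_Δ τ_1) ∪ V(lk_Δ τ_2) = V(Δ) if and only if Δ = lk_Δ τ_1 * lk_Δ τ_2. -/

import Mathlib

open Finset

/-- An abstract simplicial complex on vertex type `V`, given by a finite,
downward-closed family of finite faces containing the empty face. -/
structure SC (V : Type*) [DecidableEq V] where
  faces : Finset (Finset V)
  empty_mem : ∅ ∈ faces
  down_closed : ∀ ⦃σ τ : Finset V⦄, σ ∈ faces → τ ⊆ σ → τ ∈ faces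

namespace SC

variable {V : Type*} [DecidableEq V]

/-- The vertex set of a complex. -/
def vertexSet (Δ : SC V) : Finset V := Δ.faces.sup id

/-- `fNum Δ i` is the number of `i`-dimensional faces (faces of cardinality `i+1`). -/
def fNum (Δ : SC V) (i : ℕ) : ℕ := (Δ.faces.filter fun σ => σ.card = i + 1).card

/-- A complex is flag if it is the clique complex of its graph, i.e. every set of
vertices which is pairwise joined by edges is a face (equivalently, all minimal
non-faces have cardinality two). -/
def IsFlag (Δ : SC V) : Prop :=
  ∀ σ : Finset V, (∀ u ∈ σ, ∀ v ∈ σ, ({u, v} : Finset V) ∈ Δ.faces) → σ ∈ Δ.faces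

/-- The restriction `Δ[W]` of `Δ` to a set `W` of vertices. -/
def restrict (Δ : SC V) (W : Finset V) : SC V where
  faces := Δ.faces.filter fun σ => σ ⊆ W
  empty_mem := by simp [Δ.empty_mem]
  down_closed := by
    intro σ τ hσ hτ
    simp only [mem_filter] at hσ ⊢
    exact ⟨Δ.down_closed hσ.1 hτ, hτ.trans hσ.2⟩

/-- The link of a face `σ` in `Δ`. -/
def link (Δ : SC V) (σ : Finset V) : SC V where
  faces := insert ∅ (Δ.faces.filter fun τ => Disjoint τ σ ∧ τ ∪ σ ∈ Δ.faces)
  empty_mem := mem_insert_self _ _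
  down_closed := by
    intro τ ρ hτ hρ
    rcases mem_insert.1 hτ with h | h
    · subst h
      simp [Finset.subset_empty.1 hρ]
    · simp only [mem_filter] at h
      refine mem_insert.2 (Or.inr ?_)
      simp only [mem_filter]
      exact ⟨Δ.down_closed h.1 hρ, h.2.1.mono_left hρ,
        Δ.down_closed h.2.2 (Finset.union_subset_union hρ Finset.Subset.rfl)⟩

/-- A facet is a maximal face. -/
def IsFacet (Δ : SC V) (σ : Finset V) : Prop :=
  σ ∈ Δ.faces ∧ ∀ τ ∈ Δ.faces, σ ⊆ τ → σ = τ

/-- `Δ` is pure of dimension `D`: all faces have dimension at most `D` and all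
facets have dimension exactly `D`. -/
def Pure (Δ : SC V) (D : ℕ) : Prop :=
  (∀ σ ∈ Δ.faces, σ.card ≤ D + 1) ∧ (∃ σ ∈ Δ.faces, σ.card = D + 1) ∧
    ∀ σ : Finset V, Δ.IsFacet σ → σ.card = D + 1

/-- The graph (1-skeleton) of a complex. -/
def graph (Δ : SC V) : SimpleGraph V where
  Adj u v := u ≠ v ∧ ({u, v} : Finset V) ∈ Δ.faces
  symm := by
    constructor
    intro u v h
    exact ⟨h.1.symm, by rw [Finset.pair_comm]; exact h.2⟩
  loopless := by constructor; intro u h; exact h.1 rfl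

/-- A complex is connected if its vertex set is nonempty and any two vertices are
joined by a path in its graph. -/
def Connected (Δ : SC V) : Prop :=
  Δ.vertexSet.Nonempty ∧ ∀ u ∈ Δ.vertexSet, ∀ v ∈ Δ.vertexSet, Δ.graph.Reachable u v

/-- The reduced Euler characteristic `χ̃(Δ) = -1 + f₀ - f₁ + f₂ - ⋯`. -/
def redChar (Δ : SC V) : ℤ := -∑ σ ∈ Δ.faces, (-1 : ℤ) ^ σ.card

/-- `Δ` is an Eulerian complex of dimension `D`: it is pure of dimension `D` and the
reduced Euler characteristic of the link of every face `σ` (including `σ = ∅`)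
equals `(-1) ^ (dim lk σ)`, written multiplicatively to avoid signed dimensions. -/
def IsEulerian (Δ : SC V) (D : ℕ) : Prop :=
  Δ.Pure D ∧ ∀ σ ∈ Δ.faces, (Δ.link σ).redChar * (-1) ^ σ.card = (-1) ^ D

/-- A weak pseudomanifold of dimension `D`: pure and every ridge ((D-1)-face) lies
in exactly two facets. -/
def IsWeakPseudo (Δ : SC V) (D : ℕ) : Prop :=
  Δ.Pure D ∧ ∀ σ ∈ Δ.faces, σ.card = D →
    (Δ.faces.filter fun τ => σ ⊆ τ ∧ τ.card = D + 1).card = 2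

/-- A normal pseudomanifold of dimension `D`: a connected weak pseudomanifold all of
whose links of faces of dimension `≤ D - 2` are connected. -/
def IsNormalPseudo (Δ : SC V) (D : ℕ) : Prop :=
  Δ.IsWeakPseudo D ∧ Δ.Connected ∧
    ∀ σ ∈ Δ.faces, σ.card + 1 ≤ D → (Δ.link σ).Connected

/-- The join of two complexes (on disjoint vertex sets). -/
def join (Δ Γ : SC V) : SC V where
  faces := (Δ.faces ×ˢ Γ.faces).image fun p => p.1 ∪ p.2
  empty_mem := Finset.mem_image.2 ⟨(∅, ∅),
    Finset.mem_product.2 ⟨Δ.empty_mem, Γ.empty_mem⟩, Finset.union_empty ∅⟩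
  down_closed := by
    intro σ τ hσ hτ
    rw [Finset.mem_image] at hσ ⊢
    obtain ⟨⟨a, b⟩, hab, rfl⟩ := hσ
    rw [Finset.mem_product] at hab
    refine ⟨(τ ∩ a, τ ∩ b), Finset.mem_product.2
      ⟨Δ.down_closed hab.1 Finset.inter_subset_right,
       Γ.down_closed hab.2 Finset.inter_subset_right⟩, ?_⟩
    rw [← Finset.inter_union_distrib_left]
    exact Finset.inter_eq_left.2 hτ

/-- The trivial complex, whose only face is the empty face (identity for join). -/
def trivialSC : SC V where
  faces := {∅}
  empty_mem := Finset.mem_singleton_self ∅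
  down_closed := by
    intro σ τ hσ hτ
    simp only [Finset.mem_singleton] at hσ ⊢
    subst hσ
    exact Finset.subset_empty.1 hτ

/-- The join of a finite family of complexes. -/
def bigJoin : {k : ℕ} → (Fin k → SC V) → SC V
  | 0, _ => trivialSC
  | _ + 1, C => (C 0).join (bigJoin fun i => C i.succ)

/-- `Δ` is a cycle (circle) with `n` vertices: a connected, 1-dimensional complex
all of whose vertices have exactly two neighbours. -/
def IsCycle (Δ : SC V) (n : ℕ) : Prop :=
  Δ.vertexSet.card = n ∧ (∀ σ ∈ Δ.faces, σ.card ≤ 2) ∧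
    (∀ v ∈ Δ.vertexSet, (Δ.link {v}).vertexSet.card = 2) ∧ Δ.Connected

/-- `Δ` is the boundary complex of the `d`-dimensional cross-polytope: its vertices
come in `d` antipodal pairs and the faces are exactly the sets containing at most
one vertex of each pair. -/
def IsCrossPolytopeBoundary (Δ : SC V) (d : ℕ) : Prop :=
  ∃ x y : Fin d → V, Function.Injective x ∧ Function.Injective y ∧
    (∀ i j, x i ≠ y j) ∧
    ∀ σ : Finset V, σ ∈ Δ.faces ↔
      ((∀ v ∈ σ, ∃ i, v = x i ∨ v = y i) ∧ ∀ i, ¬(x i ∈ σ ∧ y i ∈ σ))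

/-- `Δ` is a simplicial 2-sphere: a connected weak 2-pseudomanifold whose vertex
links are circles and whose reduced Euler characteristic is 1. -/
def IsSphere2 (Δ : SC V) : Prop :=
  Δ.Connected ∧ Δ.IsWeakPseudo 2 ∧
    (∀ v ∈ Δ.vertexSet, ∃ n, 3 ≤ n ∧ (Δ.link {v}).IsCycle n) ∧ Δ.redChar = 1

/-- `Δ` is a (closed) simplicial 3-manifold: connected, pure of dimension 3, and the
link of every vertex is a simplicial 2-sphere. -/
def Is3Manifold (Δ : SC V) : Prop :=
  Δ.Connected ∧ Δ.Pure 3 ∧ ∀ v ∈ Δ.vertexSet, (Δ.link {v}).IsSphere2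

/-- `Δ` is a disjoint union of cycles, each of length at least 4: it is
1-dimensional, 2-regular and its graph has no triangles. -/
def IsDisjointUnionOfCyclesGe4 (Δ : SC V) : Prop :=
  (∀ σ ∈ Δ.faces, σ.card ≤ 2) ∧
    (∀ v ∈ Δ.vertexSet, (Δ.link {v}).vertexSet.card = 2) ∧
    ∀ u v w : V, ({u, v} : Finset V) ∈ Δ.faces → ({v, w} : Finset V) ∈ Δ.faces →
      ({u, w} : Finset V) ∈ Δ.faces → u = v ∨ v = w ∨ u = w

end SC

namespace SC

variable {V : Type*} [DecidableEq V]

-- ====== my helpers =======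

theorem sc_ext {Δ₁ Δ₂ : SC V} (h : Δ₁.faces = Δ₂.faces) : Δ₁ = Δ₂ := by
  cases Δ₁; cases Δ₂; cases h; rfl

theorem mem_vertexSet_iff {Δ : SC V} {u : V} :
    u ∈ Δ.vertexSet ↔ {u} ∈ Δ.faces := by
  unfold vertexSet
  simp only [Finset.mem_sup, id]
  constructor
  · rintro ⟨F, hF, hu⟩
    exact Δ.down_closed hF (by simpa using hu)
  · exact fun h => ⟨{u}, h, by simp⟩

theorem subset_vertexSet {Δ : SC V} {F : Finset V} (h : F ∈ Δ.faces) :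
    F ⊆ Δ.vertexSet := fun u hu =>
  mem_vertexSet_iff.2 (Δ.down_closed h (by simpa using hu))

theorem mem_link_iff {Δ : SC V} {σ : Finset V} (hσ : σ ∈ Δ.faces) {ρ : Finset V} :
    ρ ∈ (Δ.link σ).faces ↔ Disjoint ρ σ ∧ ρ ∪ σ ∈ Δ.faces := by
  unfold link
  simp only [mem_insert, mem_filter]
  constructor
  · rintro (rfl | h)
    · simpa using hσ
    · exact h.2
  · intro h
    exact Or.inr ⟨Δ.down_closed h.2 Finset.subset_union_left, h⟩

theorem exists_facet {Δ : SC V} {F : Finset V} (h : F ∈ Δ.faces) :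
    ∃ G, Δ.IsFacet G ∧ F ⊆ G := by
  obtain ⟨G, hG, hmax⟩ := Finset.exists_max_image (Δ.faces.filter fun τ => F ⊆ τ)
    Finset.card ⟨F, by simp [h]⟩
  simp only [mem_filter] at hG
  refine ⟨G, ⟨hG.1, ?_⟩, hG.2⟩
  intro τ hτ hsub
  exact Finset.eq_of_subset_of_card_le hsub
    (hmax τ (by simp only [mem_filter]; exact ⟨hτ, hG.2.trans hsub⟩))

theorem facet_card {Δ : SC V} {D : ℕ} (hp : Δ.Pure D) {G : Finset V}
    (hG : Δ.IsFacet G) : G.card = D + 1 := hp.2.2 G hG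

theorem facet_of_card {Δ : SC V} {D : ℕ} (hp : Δ.Pure D) {G : Finset V}
    (hG : G ∈ Δ.faces) (hc : G.card = D + 1) : Δ.IsFacet G :=
  ⟨hG, fun τ hτ hsub => Finset.eq_of_subset_of_card_le hsub (by rw [hc]; exact hp.1 τ hτ)⟩

theorem flag_union {Δ : SC V} (hflag : Δ.IsFlag) {F₁ F₂ : Finset V}
    (h₁ : F₁ ∈ Δ.faces) (h₂ : F₂ ∈ Δ.faces)
    (hcross : ∀ u ∈ F₁, ∀ v ∈ F₂, ({u, v} : Finset V) ∈ Δ.faces) :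
    F₁ ∪ F₂ ∈ Δ.faces := by
  apply hflag
  intro u hu v hv
  rcases Finset.mem_union.1 hu with hu1 | hu2 <;> rcases Finset.mem_union.1 hv with hv1 | hv2
  · exact Δ.down_closed h₁ (by simp [Finset.insert_subset_iff, hu1, hv1])
  · exact hcross u hu1 v hv2
  · rw [Finset.pair_comm]; exact hcross v hv1 u hu2
  · exact Δ.down_closed h₂ (by simp [Finset.insert_subset_iff, hu2, hv2])

theorem link_congr {Δ₁ Δ₂ : SC V} (h : Δ₁.faces = Δ₂.faces) (σ : Finset V) :
    (Δ₁.link σ).faces = (Δ₂.link σ).faces := by unfold link; simp only [h]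

theorem graph_congr {Δ₁ Δ₂ : SC V} (h : Δ₁.faces = Δ₂.faces) : Δ₁.graph = Δ₂.graph := by
  unfold graph; simp only [h]

theorem connected_congr {Δ₁ Δ₂ : SC V} (h : Δ₁.faces = Δ₂.faces) (hc : Δ₁.Connected) :
    Δ₂.Connected := by
  have hv : Δ₁.vertexSet = Δ₂.vertexSet := by unfold vertexSet; rw [h]
  have hg : Δ₁.graph = Δ₂.graph := graph_congr h
  rw [Connected, ← hv, ← hg]; exact hc

theorem link_link {Δ : SC V} {τ σ : Finset V} (hτ : τ ∈ Δ.faces)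
    (hσ : σ ∈ (Δ.link τ).faces) :
    ((Δ.link τ).link σ).faces = (Δ.link (σ ∪ τ)).faces := by
  obtain ⟨hdisj, hστ⟩ := (mem_link_iff hτ).1 hσ
  ext ρ
  rw [mem_link_iff hσ, mem_link_iff hστ, mem_link_iff hτ, Finset.union_assoc]
  constructor
  · rintro ⟨h1, h2, h3⟩
    exact ⟨Finset.disjoint_union_right.2 ⟨h1, (Finset.disjoint_union_left.1 h2).1⟩, h3⟩
  · rintro ⟨h1, h3⟩
    obtain ⟨h1σ, h1τ⟩ := Finset.disjoint_union_right.1 h1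
    exact ⟨h1σ, Finset.disjoint_union_left.2 ⟨h1τ, hdisj⟩, h3⟩

theorem link_empty (Δ : SC V) : (Δ.link ∅).faces = Δ.faces := by
  ext ρ; rw [mem_link_iff Δ.empty_mem]; simp

theorem link_facet {Δ : SC V} {τ : Finset V} (hτ : τ ∈ Δ.faces) {K : Finset V}
    (hK : (Δ.link τ).IsFacet K) : Δ.IsFacet (K ∪ τ) := by
  obtain ⟨hdisj, hKτ⟩ := (mem_link_iff hτ).1 hK.1
  refine ⟨hKτ, fun G hG hsub => ?_⟩
  have hτG : τ ⊆ G := Finset.subset_union_right.trans hsub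
  have hGτ : G \ τ ∈ (Δ.link τ).faces := by
    rw [mem_link_iff hτ]
    exact ⟨Finset.sdiff_disjoint, by rwa [Finset.sdiff_union_of_subset hτG]⟩
  have hKsub : K ⊆ G \ τ :=
    Finset.subset_sdiff.2 ⟨Finset.subset_union_left.trans hsub, hdisj⟩
  have := hK.2 _ hGτ hKsub
  rw [this, Finset.sdiff_union_of_subset hτG]

theorem facet_link {Δ : SC V} {τ : Finset V} (hτ : τ ∈ Δ.faces) {G : Finset V}
    (hG : Δ.IsFacet G) (hsub : τ ⊆ G) : (Δ.link τ).IsFacet (G \ τ) := by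
  have hGτ : G \ τ ∈ (Δ.link τ).faces := by
    rw [mem_link_iff hτ]
    exact ⟨Finset.sdiff_disjoint, by rw [Finset.sdiff_union_of_subset hsub]; exact hG.1⟩
  refine ⟨hGτ, fun K hK hsub2 => ?_⟩
  obtain ⟨hdisj, hKτ⟩ := (mem_link_iff hτ).1 hK
  have : G ⊆ K ∪ τ := by
    rw [← Finset.sdiff_union_of_subset hsub]
    exact Finset.union_subset_union hsub2 Finset.Subset.rfl
  have hGK := hG.2 _ hKτ this
  rw [hGK, Finset.union_sdiff_right]
  exact Finset.sdiff_eq_self_iff_disjoint.2 hdisj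

def NPM (Δ : SC V) (D : ℕ) : Prop :=
  Δ.Pure D ∧
  (∀ σ ∈ Δ.faces, σ.card = D → (Δ.faces.filter fun τ => σ ⊆ τ ∧ τ.card = D + 1).card = 2) ∧
  (1 ≤ D → Δ.Connected) ∧
  (∀ σ ∈ Δ.faces, σ.card + 1 ≤ D → (Δ.link σ).Connected)

theorem union_singleton_eq (F : Finset V) (v : V) : F ∪ {v} = insert v F := by
  rw [Finset.union_comm, ← Finset.insert_eq]

theorem card_union_singleton {F : Finset V} {v : V} (h : v ∉ F) :
    (F ∪ {v}).card = F.card + 1 := by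
  rw [union_singleton_eq, Finset.card_insert_of_notMem h]

theorem pure_congr {Δ₁ Δ₂ : SC V} (h : Δ₁.faces = Δ₂.faces) {D : ℕ} (hp : Δ₁.Pure D) :
    Δ₂.Pure D := by
  unfold Pure IsFacet at *
  rw [← h]
  exact hp

theorem npm_congr {Δ₁ Δ₂ : SC V} (h : Δ₁.faces = Δ₂.faces) {D : ℕ} (hn : NPM Δ₁ D) :
    NPM Δ₂ D := by
  obtain ⟨hp, hw, hc, hl⟩ := hn
  refine ⟨pure_congr h hp, by rw [← h]; exact hw,
    fun hD => connected_congr h (hc hD), fun σ hσ hcard =>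
      connected_congr (link_congr h σ) (hl σ (h ▸ hσ) hcard)⟩

theorem link_npm {Δ : SC V} {E : ℕ} (hn : NPM Δ (E + 1)) {v : V}
    (hv : ({v} : Finset V) ∈ Δ.faces) : NPM (Δ.link {v}) E := by
  obtain ⟨hp, hwk, hconn, hlk⟩ := hn
  have hcardlk : ∀ F ∈ (Δ.link {v}).faces, v ∉ F ∧ F ∪ {v} ∈ Δ.faces ∧
      (F ∪ {v}).card = F.card + 1 := by
    intro F hF
    obtain ⟨h1, h2⟩ := (mem_link_iff hv).1 hF
    have hv' : v ∉ F := by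
      intro hvF; exact (Finset.disjoint_right.1 h1 (Finset.mem_singleton_self v)) hvF
    exact ⟨hv', h2, card_union_singleton hv'⟩
  have hpure : (Δ.link {v}).Pure E := by
    refine ⟨?_, ?_, ?_⟩
    · intro F hF
      obtain ⟨_, h2, h3⟩ := hcardlk F hF
      have := hp.1 _ h2
      omega
    · obtain ⟨G, hG, hGsub⟩ := exists_facet hv
      have hvG : v ∈ G := hGsub (Finset.mem_singleton_self v)
      have hGk : (Δ.link {v}).IsFacet (G \ {v}) := facet_link hv hG hGsub
      refine ⟨G \ {v}, hGk.1, ?_⟩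
      have hc := facet_card hp hG
      rw [Finset.sdiff_singleton_eq_erase, Finset.card_erase_of_mem hvG]
      omega
    · intro F hF
      have := facet_card hp (link_facet hv hF)
      obtain ⟨_, _, h3⟩ := hcardlk F hF.1
      omega
  refine ⟨hpure, ?_, fun hE => ?_, ?_⟩
  · -- weak pseudomanifold condition
    intro R hR hRc
    obtain ⟨hvR, hRv, hRvc⟩ := hcardlk R hR
    have h2 := hwk (R ∪ {v}) hRv (by omega)
    rw [← h2]
    refine Finset.card_bij' (fun K _ => K ∪ {v}) (fun τ _ => τ \ {v}) ?hi ?hj ?left ?right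
    case hi =>
      intro K hK
      simp only [Finset.mem_filter] at hK ⊢
      obtain ⟨hvK, hKv, hKvc⟩ := hcardlk K hK.1
      exact ⟨hKv, Finset.union_subset_union hK.2.1 Finset.Subset.rfl, by omega⟩
    case hj =>
      intro τ hτ
      simp only [Finset.mem_filter] at hτ ⊢
      obtain ⟨hτf, hτsub, hτc⟩ := hτ
      have hvτ : v ∈ τ := hτsub (Finset.mem_union_right _ (Finset.mem_singleton_self v))
      have hmem : τ \ {v} ∈ (Δ.link {v}).faces := by
        rw [mem_link_iff hv]
        exact ⟨Finset.sdiff_disjoint, by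
          rwa [Finset.sdiff_union_of_subset (Finset.singleton_subset_iff.2 hvτ)]⟩
      refine ⟨hmem, ?_, ?_⟩
      · refine Finset.subset_sdiff.2 ⟨(Finset.subset_union_left).trans hτsub, ?_⟩
        exact Finset.disjoint_singleton_right.2 hvR
      · rw [Finset.sdiff_singleton_eq_erase, Finset.card_erase_of_mem hvτ]; omega
    case left =>
      intro K hK
      show (K ∪ {v}) \ {v} = K
      simp only [Finset.mem_filter] at hK
      obtain ⟨hvK, _, _⟩ := hcardlk K hK.1
      rw [Finset.union_sdiff_right]
      exact Finset.sdiff_eq_self_iff_disjoint.2 (Finset.disjoint_singleton_right.2 hvK)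
    case right =>
      intro τ hτ
      show (τ \ {v}) ∪ {v} = τ
      simp only [Finset.mem_filter] at hτ
      have hvτ : v ∈ τ := hτ.2.1 (Finset.mem_union_right _ (Finset.mem_singleton_self v))
      exact Finset.sdiff_union_of_subset (Finset.singleton_subset_iff.2 hvτ)
  · -- connectivity of the link
    exact hlk {v} hv (by simpa using hE)
  · -- links of the link are connected
    intro σ hσ hcard
    have h1 := link_link hv hσ
    have h2 : σ ∪ {v} ∈ Δ.faces := ((mem_link_iff hv).1 hσ).2
    have hvσ : v ∉ σ := by
      have := ((mem_link_iff hv).1 hσ).1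
      exact fun hvs => (Finset.disjoint_left.1 this hvs) (Finset.mem_singleton_self v)
    have hc2 : (σ ∪ {v}).card = σ.card + 1 := card_union_singleton hvσ
    exact connected_congr h1.symm (hlk (σ ∪ {v}) h2 (by omega))

theorem link_npm_face {Δ : SC V} {D : ℕ} (hn : NPM Δ D) :
    ∀ (n : ℕ) (τ : Finset V), τ ∈ Δ.faces → τ.card = n → n ≤ D →
      NPM (Δ.link τ) (D - n) := by
  intro n
  induction n with
  | zero =>
    intro τ hτ hc _
    rw [Finset.card_eq_zero] at hc
    subst hc
    exact npm_congr (link_empty Δ).symm (by simpa using hn)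
  | succ m ih =>
    intro τ hτ hc hle
    obtain ⟨v, hvτ⟩ : τ.Nonempty := Finset.card_pos.1 (by omega)
    have hτ' : τ.erase v ∈ Δ.faces := Δ.down_closed hτ (Finset.erase_subset v τ)
    have h1 : NPM (Δ.link (τ.erase v)) (D - m) :=
      ih (τ.erase v) hτ' (by rw [Finset.card_erase_of_mem hvτ, hc]; omega) (by omega)
    have hvlk : ({v} : Finset V) ∈ (Δ.link (τ.erase v)).faces := by
      rw [mem_link_iff hτ']
      constructor
      · simp
      · rw [← Finset.insert_eq, Finset.insert_erase hvτ]
        exact hτ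
    have hDm : D - m = (D - (m + 1)) + 1 := by omega
    rw [hDm] at h1
    have h2 := link_npm h1 hvlk
    have h3 : ((Δ.link (τ.erase v)).link {v}).faces = (Δ.link τ).faces := by
      rw [link_link hτ' hvlk, ← Finset.insert_eq, Finset.insert_erase hvτ]
    exact npm_congr h3 h2

def dualAdj (Δ : SC V) (D : ℕ) (X Y : Finset V) : Prop :=
  X ∈ Δ.faces ∧ Y ∈ Δ.faces ∧ X.card = D + 1 ∧ Y.card = D + 1 ∧ D ≤ (X ∩ Y).card

theorem dual_conn : ∀ (D : ℕ) (Δ : SC V), NPM Δ D →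
    ∀ G G', Δ.IsFacet G → Δ.IsFacet G' →
      Relation.ReflTransGen (Δ.dualAdj D) G G' := by
  intro D
  induction D using Nat.strong_induction_on with
  | _ D IH =>
  intro Δ hn G G' hG hG'
  match D, hn with
  | 0, hn =>
    exact Relation.ReflTransGen.single
      ⟨hG.1, hG'.1, facet_card hn.1 hG, facet_card hn.1 hG', Nat.zero_le _⟩
  | E + 1, hn =>
  have star : ∀ (u : V) (H H' : Finset V), Δ.IsFacet H → Δ.IsFacet H' → u ∈ H → u ∈ H' →
      Relation.ReflTransGen (Δ.dualAdj (E + 1)) H H' := by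
    intro u H H' hH hH' huH huH'
    rcases Nat.eq_zero_or_pos E with rfl | hE
    · refine Relation.ReflTransGen.single
        ⟨hH.1, hH'.1, facet_card hn.1 hH, facet_card hn.1 hH', ?_⟩
      exact Finset.card_pos.2 ⟨u, Finset.mem_inter.2 ⟨huH, huH'⟩⟩
    · have hv : ({u} : Finset V) ∈ Δ.faces :=
        Δ.down_closed hH.1 (Finset.singleton_subset_iff.2 huH)
      have hlkn : NPM (Δ.link {u}) E := link_npm hn hv
      have h1 : (Δ.link {u}).IsFacet (H \ {u}) :=
        facet_link hv hH (Finset.singleton_subset_iff.2 huH)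
      have h1' : (Δ.link {u}).IsFacet (H' \ {u}) :=
        facet_link hv hH' (Finset.singleton_subset_iff.2 huH')
      have hpath := IH E (by omega) (Δ.link {u}) hlkn _ _ h1 h1'
      -- lift the path
      have hlift : ∀ {X Y : Finset V},
          Relation.ReflTransGen ((Δ.link {u}).dualAdj E) X Y →
          Relation.ReflTransGen (Δ.dualAdj (E + 1)) (X ∪ {u}) (Y ∪ {u}) := by
        intro X Y h
        induction h with
        | refl => exact Relation.ReflTransGen.refl
        | tail _ h2 ih =>
          rename_i X' Y' _
          obtain ⟨ha, hb, hcX, hcY, hcap⟩ := h2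
          have hXa := (mem_link_iff hv).1 ha
          have hYa := (mem_link_iff hv).1 hb
          have huX : u ∉ X' := fun hx =>
            (Finset.disjoint_left.1 hXa.1 hx) (Finset.mem_singleton_self u)
          have huY : u ∉ Y' := fun hx =>
            (Finset.disjoint_left.1 hYa.1 hx) (Finset.mem_singleton_self u)
          refine ih.tail ⟨hXa.2, hYa.2, ?_, ?_, ?_⟩
          · rw [card_union_singleton huX]; omega
          · rw [card_union_singleton huY]; omega
          · have hsub : (X' ∩ Y') ∪ {u} ⊆ (X' ∪ {u}) ∩ (Y' ∪ {u}) := by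
              intro x hx
              rcases Finset.mem_union.1 hx with hx | hx
              · exact Finset.mem_inter.2
                  ⟨Finset.mem_union_left _ (Finset.mem_inter.1 hx).1,
                   Finset.mem_union_left _ (Finset.mem_inter.1 hx).2⟩
              · exact Finset.mem_inter.2
                  ⟨Finset.mem_union_right _ hx, Finset.mem_union_right _ hx⟩
            have hcard : ((X' ∩ Y') ∪ {u}).card = (X' ∩ Y').card + 1 :=
              card_union_singleton (fun hx => huX (Finset.mem_inter.1 hx).1)
            have := Finset.card_le_card hsub
            omega
      have := hlift hpath
      rwa [Finset.sdiff_union_of_subset (Finset.singleton_subset_iff.2 huH),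
        Finset.sdiff_union_of_subset (Finset.singleton_subset_iff.2 huH')] at this
  have key : ∀ (u u' : V) (_ : Δ.graph.Walk u u') (H H' : Finset V),
      Δ.IsFacet H → Δ.IsFacet H' → u ∈ H → u' ∈ H' →
      Relation.ReflTransGen (Δ.dualAdj (E + 1)) H H' := by
    intro u u' w
    induction w with
    | nil =>
      intro H H' hH hH' hu hu'
      exact star _ H H' hH hH' hu hu'
    | cons h p ih =>
      rename_i a b c
      intro H H' hH hH' hu hu'
      have hedge : ({a, b} : Finset V) ∈ Δ.faces := h.2
      obtain ⟨M, hM, hsubM⟩ := exists_facet hedge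
      exact (star a H M hH hM hu (hsubM (by simp))).trans
        (ih M H' hM hH' (hsubM (by simp)) hu')
  have hconn := hn.2.2.1 (by omega)
  have hGne : G.Nonempty := by
    have := facet_card hn.1 hG
    exact Finset.card_pos.1 (by omega)
  have hGne' : G'.Nonempty := by
    have := facet_card hn.1 hG'
    exact Finset.card_pos.1 (by omega)
  obtain ⟨u, hu⟩ := hGne
  obtain ⟨u', hu'⟩ := hGne'
  obtain ⟨w⟩ := hconn.2 u (subset_vertexSet hG.1 hu) u' (subset_vertexSet hG'.1 hu')
  exact key u u' w G G' hG hG' hu hu'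


theorem join_faces (Δ Γ : SC V) :
    (Δ.join Γ).faces = (Δ.faces ×ˢ Γ.faces).image fun p => p.1 ∪ p.2 := rfl

theorem join_vertexSet (Δ Γ : SC V) :
    (Δ.join Γ).vertexSet = Δ.vertexSet ∪ Γ.vertexSet := by
  ext u
  simp only [Finset.mem_union, mem_vertexSet_iff]
  constructor
  · intro h
    rw [join_faces] at h
    obtain ⟨⟨F₁, F₂⟩, hmem, heq⟩ := Finset.mem_image.1 h
    obtain ⟨h1, h2⟩ := Finset.mem_product.1 hmem
    have hu : u ∈ F₁ ∪ F₂ := by rw [heq]; exact Finset.mem_singleton_self u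
    rcases Finset.mem_union.1 hu with h | h
    · exact Or.inl (Δ.down_closed h1 (Finset.singleton_subset_iff.2 h))
    · exact Or.inr (Γ.down_closed h2 (Finset.singleton_subset_iff.2 h))
  · rintro (h | h)
    · exact Finset.mem_image.2
        ⟨({u}, ∅), Finset.mem_product.2 ⟨h, Γ.empty_mem⟩, Finset.union_empty _⟩
    · exact Finset.mem_image.2
        ⟨(∅, {u}), Finset.mem_product.2 ⟨Δ.empty_mem, h⟩, Finset.empty_union _⟩

/-- The key exchange lemma along a dual-graph step. -/
theorem exchange {Δ L₂ : SC V} {A : Finset V} {a b N : ℕ} (hN : a + b + 2 = N)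
    (hΔwk : ∀ σ ∈ Δ.faces, σ.card + 1 = N →
      (Δ.faces.filter fun τ => σ ⊆ τ ∧ τ.card = N).card = 2)
    (hL₂wk : ∀ σ ∈ L₂.faces, σ.card = b →
      (L₂.faces.filter fun τ => σ ⊆ τ ∧ τ.card = b + 1).card = 2)
    (hL₂A : ∀ F ∈ L₂.faces, ∀ x ∈ F, x ∉ A)
    (hdecomp : ∀ G ∈ Δ.faces, G.card = N →
      ((G ∩ A).card = a + 1 ∧ G \ A ∈ L₂.faces ∧ (G \ A).card = b + 1))
    {F₁ F₂ F₂' : Finset V}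
    (hF₁A : F₁ ⊆ A) (hF₁c : F₁.card = a + 1)
    (hF₂ : F₂ ∈ L₂.faces) (hF₂c : F₂.card = b + 1)
    (hF₂' : F₂' ∈ L₂.faces) (hF₂c' : F₂'.card = b + 1)
    (hint : b ≤ (F₂ ∩ F₂').card)
    (hun : F₁ ∪ F₂ ∈ Δ.faces) : F₁ ∪ F₂' ∈ Δ.faces := by
  by_cases heq2 : F₂ = F₂'
  · rwa [← heq2]
  have hdisj12 : Disjoint F₁ F₂ :=
    Finset.disjoint_left.2 fun x hx1 hx2 => hL₂A F₂ hF₂ x hx2 (hF₁A hx1)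
  have hcap : (F₂ ∩ F₂').card = b := by
    by_contra hne
    have h1 : (F₂ ∩ F₂').card ≤ b + 1 :=
      le_trans (Finset.card_le_card Finset.inter_subset_left) (le_of_eq hF₂c)
    have h3 : F₂ ∩ F₂' = F₂ :=
      Finset.eq_of_subset_of_card_le Finset.inter_subset_left (by omega)
    have h4 : F₂ ⊆ F₂' := by rw [← h3]; exact Finset.inter_subset_right
    exact heq2 (Finset.eq_of_subset_of_card_le h4 (by omega))
  have hρ : F₂ ∩ F₂' ∈ L₂.faces := L₂.down_closed hF₂ Finset.inter_subset_left
  have hT := hL₂wk _ hρ hcap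
  have hF₂T : F₂ ∈ L₂.faces.filter (fun τ => F₂ ∩ F₂' ⊆ τ ∧ τ.card = b + 1) :=
    Finset.mem_filter.2 ⟨hF₂, Finset.inter_subset_left, hF₂c⟩
  have hF₂T' : F₂' ∈ L₂.faces.filter (fun τ => F₂ ∩ F₂' ⊆ τ ∧ τ.card = b + 1) :=
    Finset.mem_filter.2 ⟨hF₂', Finset.inter_subset_right, hF₂c'⟩
  have hTeq : L₂.faces.filter (fun τ => F₂ ∩ F₂' ⊆ τ ∧ τ.card = b + 1) = {F₂, F₂'} := by
    symm
    apply Finset.eq_of_subset_of_card_le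
    · intro x hx
      rcases Finset.mem_insert.1 hx with rfl | hx
      · exact hF₂T
      · rw [Finset.mem_singleton] at hx; subst hx; exact hF₂T'
    · rw [hT, Finset.card_pair heq2]
  have hρA : ∀ x ∈ F₂ ∩ F₂', x ∉ A := fun x hx =>
    hL₂A F₂ hF₂ x (Finset.mem_of_mem_inter_left hx)
  have hdisj1ρ : Disjoint F₁ (F₂ ∩ F₂') :=
    Finset.disjoint_left.2 fun x hx1 hx2 => hρA x hx2 (hF₁A hx1)
  have hR : F₁ ∪ (F₂ ∩ F₂') ∈ Δ.faces :=
    Δ.down_closed hun (Finset.union_subset_union Finset.Subset.rfl Finset.inter_subset_left)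
  have hRc : (F₁ ∪ (F₂ ∩ F₂')).card + 1 = N := by
    rw [Finset.card_union_of_disjoint hdisj1ρ]; omega
  have hS := hΔwk _ hR hRc
  have hunc : (F₁ ∪ F₂).card = N := by
    rw [Finset.card_union_of_disjoint hdisj12]; omega
  have hclass : ∀ G ∈ Δ.faces.filter (fun τ => F₁ ∪ (F₂ ∩ F₂') ⊆ τ ∧ τ.card = N),
      G = F₁ ∪ F₂ ∨ G = F₁ ∪ F₂' := by
    intro G hG
    obtain ⟨hGf, hRG, hGc⟩ := Finset.mem_filter.1 hG
    obtain ⟨hcA, hGB, hcB⟩ := hdecomp G hGf hGc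
    have hF₁G : F₁ ⊆ G ∩ A :=
      Finset.subset_inter ((Finset.subset_union_left).trans hRG) hF₁A
    have hGA : G ∩ A = F₁ := (Finset.eq_of_subset_of_card_le hF₁G (by omega)).symm
    have hρG : F₂ ∩ F₂' ⊆ G \ A := Finset.subset_sdiff.2
      ⟨(Finset.subset_union_right).trans hRG, Finset.disjoint_left.2 fun x hx => hρA x hx⟩
    have hGBT : G \ A ∈ ({F₂, F₂'} : Finset (Finset V)) := by
      rw [← hTeq]; exact Finset.mem_filter.2 ⟨hGB, hρG, hcB⟩
    have hGdec : G = (G ∩ A) ∪ (G \ A) := by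
      ext x
      simp only [Finset.mem_union, Finset.mem_inter, Finset.mem_sdiff]
      tauto
    rcases Finset.mem_insert.1 hGBT with h | h
    · left; rw [hGdec, hGA, h]
    · right; rw [hGdec, hGA, Finset.mem_singleton.1 h]
  by_contra hcon
  have hsub : Δ.faces.filter (fun τ => F₁ ∪ (F₂ ∩ F₂') ⊆ τ ∧ τ.card = N) ⊆ {F₁ ∪ F₂} := by
    intro G hG
    rcases hclass G hG with rfl | rfl
    · exact Finset.mem_singleton_self _
    · exact absurd (Finset.mem_filter.1 hG).1 hcon
  have := Finset.card_le_card hsub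
  rw [hS] at this
  simp at this

end SC


/-- For a flag normal `(d-1)`-pseudomanifold with a facet `σ = τ₁ ∪ τ₂`
where `τ₁` is an `i`-face and `τ₂` a `(d-i-2)`-face, the vertex sets of the links of
`τ₁` and `τ₂` cover all of `V(Δ)` iff `Δ = lk τ₁ * lk τ₂`. -/
theorem statement_14 {V : Type*} [DecidableEq V] (Δ : SC V) (d i : ℕ)
    (hi : i + 2 ≤ d) (hflag : Δ.IsFlag) (hnp : Δ.IsNormalPseudo (d - 1))
    (τ₁ τ₂ : Finset V) (hdisj : Disjoint τ₁ τ₂) (hfacet : Δ.IsFacet (τ₁ ∪ τ₂))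
    (hc1 : τ₁.card = i + 1) (hc2 : τ₂.card = d - i - 1) :
    (Δ.link τ₁).vertexSet ∪ (Δ.link τ₂).vertexSet = Δ.vertexSet ↔
      Δ = (Δ.link τ₁).join (Δ.link τ₂) := by  classical
  obtain ⟨k, rfl⟩ : ∃ k, d = i + 2 + k := ⟨d - (i + 2), by omega⟩
  have hc2' : τ₂.card = k + 1 := by rw [hc2]; omega
  clear hc2 hi
  have hD : i + 2 + k - 1 = i + k + 1 := by omega
  rw [hD] at hnp
  have hσf : τ₁ ∪ τ₂ ∈ Δ.faces := hfacet.1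
  have hτ₁f : τ₁ ∈ Δ.faces := Δ.down_closed hσf Finset.subset_union_left
  have hτ₂f : τ₂ ∈ Δ.faces := Δ.down_closed hσf Finset.subset_union_right
  have hσc : (τ₁ ∪ τ₂).card = i + k + 2 := by
    rw [Finset.card_union_of_disjoint hdisj]; omega
  have hn : Δ.NPM (i + k + 1) := ⟨hnp.1.1, hnp.1.2, fun _ => hnp.2.1, hnp.2.2⟩
  have hnL₁ : (Δ.link τ₁).NPM k := by
    have h0 := SC.link_npm_face hn (i + 1) τ₁ hτ₁f hc1 (by omega)
    have h' : i + k + 1 - (i + 1) = k := by omega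
    rwa [h'] at h0
  have hnL₂ : (Δ.link τ₂).NPM i := by
    have h0 := SC.link_npm_face hn (k + 1) τ₂ hτ₂f hc2' (by omega)
    have h' : i + k + 1 - (k + 1) = i := by omega
    rwa [h'] at h0
  constructor
  · intro hcov
    set A := (Δ.link τ₁).vertexSet with hA
    set B := (Δ.link τ₂).vertexSet with hB
    have hmemA : ∀ u, u ∈ A ↔ u ∉ τ₁ ∧ {u} ∪ τ₁ ∈ Δ.faces := by
      intro u
      rw [hA, SC.mem_vertexSet_iff, SC.mem_link_iff hτ₁f, Finset.disjoint_singleton_left]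
    have hmemB : ∀ u, u ∈ B ↔ u ∉ τ₂ ∧ {u} ∪ τ₂ ∈ Δ.faces := by
      intro u
      rw [hB, SC.mem_vertexSet_iff, SC.mem_link_iff hτ₂f, Finset.disjoint_singleton_left]
    have hedgeA : ∀ u ∈ A, ∀ v ∈ τ₁, ({u, v} : Finset V) ∈ Δ.faces := by
      intro u hu v hv
      exact Δ.down_closed ((hmemA u).1 hu).2
        (by simp [Finset.insert_subset_iff, hv])
    have hedgeB : ∀ u ∈ B, ∀ v ∈ τ₂, ({u, v} : Finset V) ∈ Δ.faces := by
      intro u hu v hv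
      exact Δ.down_closed ((hmemB u).1 hu).2
        (by simp [Finset.insert_subset_iff, hv])
    have hABdisj : ∀ u, u ∈ A → u ∈ B → False := by
      intro u huA huB
      obtain ⟨hu1, hu1f⟩ := (hmemA u).1 huA
      obtain ⟨hu2, hu2f⟩ := (hmemB u).1 huB
      have hface : (τ₁ ∪ τ₂) ∪ {u} ∈ Δ.faces := by
        apply SC.flag_union hflag hσf (Δ.down_closed hu1f Finset.subset_union_left)
        intro x hx y hy
        rw [Finset.mem_singleton] at hy
        rw [hy, Finset.pair_comm]
        rcases Finset.mem_union.1 hx with h | h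
        · exact hedgeA u huA x h
        · exact hedgeB u huB x h
      have h5 := hfacet.2 _ hface Finset.subset_union_left
      have h6 : u ∈ τ₁ ∪ τ₂ := by
        rw [h5]; exact Finset.mem_union_right _ (Finset.mem_singleton_self u)
      rcases Finset.mem_union.1 h6 with h | h
      · exact hu1 h
      · exact hu2 h
    have hvert : ∀ F ∈ Δ.faces, ∀ x ∈ F, x ∈ A ∨ x ∈ B := by
      intro F hF x hx
      have h7 : x ∈ Δ.vertexSet := SC.subset_vertexSet hF hx
      rw [← hcov] at h7
      exact Finset.mem_union.1 h7
    have habs1 : ∀ F ∈ Δ.faces, (∀ x ∈ F, x ∈ A) → F ∈ (Δ.link τ₁).faces := by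
      intro F hF hall
      rw [SC.mem_link_iff hτ₁f]
      refine ⟨Finset.disjoint_left.2 fun x hx => ((hmemA x).1 (hall x hx)).1, ?_⟩
      exact SC.flag_union hflag hF hτ₁f (fun u hu v hv => hedgeA u (hall u hu) v hv)
    have habs2 : ∀ F ∈ Δ.faces, (∀ x ∈ F, x ∈ B) → F ∈ (Δ.link τ₂).faces := by
      intro F hF hall
      rw [SC.mem_link_iff hτ₂f]
      refine ⟨Finset.disjoint_left.2 fun x hx => ((hmemB x).1 (hall x hx)).1, ?_⟩
      exact SC.flag_union hflag hF hτ₂f (fun u hu v hv => hedgeB u (hall u hu) v hv)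
    have hfaceA : ∀ F ∈ (Δ.link τ₁).faces, ∀ x ∈ F, x ∈ A :=
      fun F hF x hx => SC.subset_vertexSet hF hx
    have hfaceB : ∀ F ∈ (Δ.link τ₂).faces, ∀ x ∈ F, x ∈ B :=
      fun F hF x hx => SC.subset_vertexSet hF hx
    have hdecompA : ∀ G ∈ Δ.faces, G.card = i + k + 2 →
        ((G ∩ A).card = k + 1 ∧ G \ A ∈ (Δ.link τ₂).faces ∧ (G \ A).card = i + 1) := by
      intro G hG hGc
      have h1 : G ∩ A ∈ (Δ.link τ₁).faces :=
        habs1 _ (Δ.down_closed hG Finset.inter_subset_left)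
          (fun x hx => (Finset.mem_inter.1 hx).2)
      have h2 : G \ A ∈ (Δ.link τ₂).faces := by
        apply habs2 _ (Δ.down_closed hG Finset.sdiff_subset)
        intro x hx
        exact (hvert G hG x (Finset.mem_sdiff.1 hx).1).resolve_left (Finset.mem_sdiff.1 hx).2
      have hb1 : (G ∩ A).card ≤ k + 1 := hnL₁.1.1 _ h1
      have hb2 : (G \ A).card ≤ i + 1 := hnL₂.1.1 _ h2
      have hsum : (G ∩ A).card + (G \ A).card = i + k + 2 := by
        rw [Finset.card_inter_add_card_sdiff]; exact hGc
      exact ⟨by omega, h2, by omega⟩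
    have hdecompB : ∀ G ∈ Δ.faces, G.card = i + k + 2 →
        ((G ∩ B).card = i + 1 ∧ G \ B ∈ (Δ.link τ₁).faces ∧ (G \ B).card = k + 1) := by
      intro G hG hGc
      have h1 : G ∩ B ∈ (Δ.link τ₂).faces :=
        habs2 _ (Δ.down_closed hG Finset.inter_subset_left)
          (fun x hx => (Finset.mem_inter.1 hx).2)
      have h2 : G \ B ∈ (Δ.link τ₁).faces := by
        apply habs1 _ (Δ.down_closed hG Finset.sdiff_subset)
        intro x hx
        exact (hvert G hG x (Finset.mem_sdiff.1 hx).1).resolve_right (Finset.mem_sdiff.1 hx).2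
      have hb1 : (G ∩ B).card ≤ i + 1 := hnL₂.1.1 _ h1
      have hb2 : (G \ B).card ≤ k + 1 := hnL₁.1.1 _ h2
      have hsum : (G ∩ B).card + (G \ B).card = i + k + 2 := by
        rw [Finset.card_inter_add_card_sdiff]; exact hGc
      exact ⟨by omega, h2, by omega⟩
    have hwkN : ∀ σ ∈ Δ.faces, σ.card + 1 = i + k + 2 →
        (Δ.faces.filter fun τ => σ ⊆ τ ∧ τ.card = i + k + 2).card = 2 := by
      intro σ hσ hc
      exact hn.2.1 σ hσ (by omega)
    have hL₂A : ∀ F ∈ (Δ.link τ₂).faces, ∀ x ∈ F, x ∉ A :=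
      fun F hF x hx hxA => hABdisj x hxA (hfaceB F hF x hx)
    have hL₁B : ∀ F ∈ (Δ.link τ₁).faces, ∀ x ∈ F, x ∉ B :=
      fun F hF x hx hxB => hABdisj x (hfaceA F hF x hx) hxB
    have moveB : ∀ {X Y : Finset V},
        Relation.ReflTransGen ((Δ.link τ₂).dualAdj i) X Y →
        ∀ {F : Finset V}, F ⊆ A → F.card = k + 1 → F ∪ X ∈ Δ.faces → F ∪ Y ∈ Δ.faces := by
      intro X Y h
      induction h with
      | refl => exact fun _ _ h0 => h0
      | tail _ h2 ih =>
        intro F hFA hFc h0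
        obtain ⟨ha, hb, hcX, hcY, hcap⟩ := h2
        exact SC.exchange (by omega) hwkN hnL₂.2.1 hL₂A hdecompA hFA hFc ha hcX hb hcY hcap
          (ih hFA hFc h0)
    have moveA : ∀ {X Y : Finset V},
        Relation.ReflTransGen ((Δ.link τ₁).dualAdj k) X Y →
        ∀ {F : Finset V}, F ⊆ B → F.card = i + 1 → X ∪ F ∈ Δ.faces → Y ∪ F ∈ Δ.faces := by
      intro X Y h
      induction h with
      | refl => exact fun _ _ h0 => h0
      | tail _ h2 ih =>
        intro F hFB hFc h0
        obtain ⟨ha, hb, hcX, hcY, hcap⟩ := h2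
        rw [Finset.union_comm]
        refine SC.exchange (by omega) hwkN hnL₁.2.1 hL₁B hdecompB hFB hFc ha hcX hb hcY hcap ?_
        rw [Finset.union_comm]
        exact ih hFB hFc h0
    have hτ₂A : τ₂ ⊆ A := by
      intro v hv
      refine (hmemA v).2 ⟨Finset.disjoint_right.1 hdisj hv, ?_⟩
      exact Δ.down_closed hσf (by simp [Finset.insert_subset_iff, hv,
        Finset.singleton_subset_iff, Finset.union_subset_iff, Finset.mem_union])
    have hτ₁B : τ₁ ⊆ B := by
      intro v hv
      refine (hmemB v).2 ⟨Finset.disjoint_left.1 hdisj hv, ?_⟩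
      exact Δ.down_closed hσf (by simp [Finset.insert_subset_iff, hv,
        Finset.singleton_subset_iff, Finset.union_subset_iff, Finset.mem_union])
    have hτ₁L₂ : τ₁ ∈ (Δ.link τ₂).faces := (SC.mem_link_iff hτ₂f).2 ⟨hdisj, hσf⟩
    have hτ₂L₁ : τ₂ ∈ (Δ.link τ₁).faces :=
      (SC.mem_link_iff hτ₁f).2 ⟨hdisj.symm, by rwa [Finset.union_comm]⟩
    have hτ₁facet : (Δ.link τ₂).IsFacet τ₁ := SC.facet_of_card hnL₂.1 hτ₁L₂ hc1
    have hτ₂facet : (Δ.link τ₁).IsFacet τ₂ := SC.facet_of_card hnL₁.1 hτ₂L₁ hc2'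
    have hkey : ∀ F₁ F₂, (Δ.link τ₁).IsFacet F₁ → (Δ.link τ₂).IsFacet F₂ →
        F₁ ∪ F₂ ∈ Δ.faces := by
      intro F₁ F₂ hF₁ hF₂
      have p2 := SC.dual_conn i (Δ.link τ₂) hnL₂ τ₁ F₂ hτ₁facet hF₂
      have h1 : τ₂ ∪ F₂ ∈ Δ.faces :=
        moveB p2 hτ₂A hc2' (by rw [Finset.union_comm]; exact hσf)
      have p1 := SC.dual_conn k (Δ.link τ₁) hnL₁ τ₂ F₁ hτ₂facet hF₁
      exact moveA p1 (fun x hx => hfaceB F₂ hF₂.1 x hx) (SC.facet_card hnL₂.1 hF₂) h1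
    apply SC.sc_ext
    apply Finset.Subset.antisymm
    · intro F hF
      rw [SC.join_faces]
      refine Finset.mem_image.2 ⟨(F ∩ A, F \ A), Finset.mem_product.2 ⟨?_, ?_⟩, ?_⟩
      · exact habs1 _ (Δ.down_closed hF Finset.inter_subset_left)
          (fun x hx => (Finset.mem_inter.1 hx).2)
      · apply habs2 _ (Δ.down_closed hF Finset.sdiff_subset)
        intro x hx
        exact (hvert F hF x (Finset.mem_sdiff.1 hx).1).resolve_left (Finset.mem_sdiff.1 hx).2
      · show F ∩ A ∪ F \ A = F
        ext x
        simp only [Finset.mem_union, Finset.mem_inter, Finset.mem_sdiff]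
        tauto
    · intro M hM
      rw [SC.join_faces] at hM
      obtain ⟨⟨M₁, M₂⟩, hmem, rfl⟩ := Finset.mem_image.1 hM
      obtain ⟨hM₁, hM₂⟩ := Finset.mem_product.1 hmem
      obtain ⟨F₁, hF₁, hsub₁⟩ := SC.exists_facet hM₁
      obtain ⟨F₂, hF₂, hsub₂⟩ := SC.exists_facet hM₂
      exact Δ.down_closed (hkey F₁ F₂ hF₁ hF₂) (Finset.union_subset_union hsub₁ hsub₂)
  · intro heq
    conv_rhs => rw [heq]
    exact (SC.join_vertexSet _ _).symm
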